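/- Let n ≥ 2 and let 𝔲 ⊆ sl_n(ℂ) be the Lie subalgebra spanned by the elementary matrices E_{1j}, 2 ≤ j ≤ n. Let 𝔥 ⊆ sl_n(ℂ) be a Lie subalgebra containing 𝔲, and suppose there exists a linear subspace 𝔥' ⊆ sl_n(ℂ) such that sl_n(ℂ) = 𝔥 ⊕ 𝔥' as vector spaces and [X, Y] ∈ 𝔥' for every X ∈ 𝔥 and Y ∈ 𝔥' (i.e., 𝔥' is a complement of 𝔥 which is invariant under the adjoint action of 𝔥). Then 𝔥 = sl_n(ℂ). -/

import Mathlib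

attribute [local instance 100] LieRing.ofAssociativeRing

/-- For `n ≥ 2`, let `𝔥` be a Lie subalgebra of `sl_n(ℂ)` containing the
Lie subalgebra `𝔲` spanned by the elementary matrices `E 0 j` (`j ≠ 0`), and suppose `𝔥`
admits a vector-space complement `𝔥'` inside `sl_n(ℂ)` with `⁅𝔥, 𝔥'⁆ ⊆ 𝔥'`.
Then `𝔥 = sl_n(ℂ)`. -/
theorem stmt_5 (n : ℕ) (hn : 2 ≤ n)
    (H : LieSubalgebra ℂ (Matrix (Fin n) (Fin n) ℂ))
    (hHsl : H ≤ LieAlgebra.SpecialLinear.sl (Fin n) ℂ)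
    (hU : ∀ j : Fin n, j ≠ ⟨0, by omega⟩ →
      Matrix.single ⟨0, by omega⟩ j 1 ∈ H)
    (H' : Submodule ℂ (Matrix (Fin n) (Fin n) ℂ))
    (hH'sl : H' ≤ (LieAlgebra.SpecialLinear.sl (Fin n) ℂ).toSubmodule)
    (hdisj : H.toSubmodule ⊓ H' = ⊥)
    (hsup : H.toSubmodule ⊔ H' = (LieAlgebra.SpecialLinear.sl (Fin n) ℂ).toSubmodule)
    (hinv : ∀ X ∈ H, ∀ Y ∈ H', ⁅X, Y⁆ ∈ H') :
    H = LieAlgebra.SpecialLinear.sl (Fin n) ℂ := by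
  set e0 : Fin n := ⟨0, by omega⟩ with he0
  set E : Fin n → Matrix (Fin n) (Fin n) ℂ := fun j => Matrix.single e0 j 1 with hEdef
  -- bracket entry formula
  have hbr : ∀ (j : Fin n) (Y : Matrix (Fin n) (Fin n) ℂ) (a b : Fin n),
      ⁅E j, Y⁆ a b = (if a = e0 then Y j b else 0) - (if b = j then Y a e0 else 0) := by
    intro j Y a b
    rw [Ring.lie_def, Matrix.sub_apply]
    congr 1
    · by_cases ha : a = e0
      · subst ha
        rw [if_pos rfl]
        show ((Matrix.single e0 j 1 : Matrix (Fin n) (Fin n) ℂ) * Y) e0 b = Y j b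
        rw [Matrix.single_mul_apply_same, one_mul]
      · rw [if_neg ha]
        show ((Matrix.single e0 j 1 : Matrix (Fin n) (Fin n) ℂ) * Y) a b = 0
        exact Matrix.single_mul_apply_of_ne (h := ha) ..
    · by_cases hb : b = j
      · subst hb
        rw [if_pos rfl]
        show (Y * (Matrix.single e0 b 1 : Matrix (Fin n) (Fin n) ℂ)) a b = Y a e0
        rw [Matrix.mul_single_apply_same, mul_one]
      · rw [if_neg hb]
        show (Y * (Matrix.single e0 j 1 : Matrix (Fin n) (Fin n) ℂ)) a b = 0
        exact Matrix.mul_single_apply_of_ne (hbj := hb) ..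
  -- entry formula for scalar multiples of E c
  have hterm : ∀ (t : ℂ) (a b c : Fin n),
      (t • E c) a b = if e0 = a ∧ c = b then t else 0 := by
    intro t a b c
    rw [Matrix.smul_apply]
    show t • (Matrix.single e0 c 1) a b = _
    unfold Matrix.single
    simp only [Matrix.of_apply, smul_eq_mul, mul_ite, mul_one, mul_zero]
  -- matrices supported on row e0 with zero (e0,e0) entry lie in H
  have hrow : ∀ (M : Matrix (Fin n) (Fin n) ℂ),
      (∀ a b, a ≠ e0 → M a b = 0) → M e0 e0 = 0 → M ∈ H := by
    intro M h1 h2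
    have hM : M = ∑ b : Fin n, (M e0 b) • E b := by
      ext a b
      rw [Matrix.sum_apply]
      simp only [hterm]
      by_cases ha : e0 = a
      · subst ha
        simp only [true_and]
        rw [Finset.sum_ite_eq' Finset.univ b (fun c => M e0 c), if_pos (Finset.mem_univ b)]
      · rw [h1 a b (fun h => ha h.symm)]
        exact (Finset.sum_eq_zero fun c _ => by rw [if_neg (fun h => ha h.1)]).symm
    rw [hM]
    have hmem : (∑ b : Fin n, (M e0 b) • E b) ∈ H.toSubmodule := by
      apply Submodule.sum_mem
      intro b _
      by_cases hb : b = e0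
      · subst hb
        rw [h2, zero_smul]
        exact Submodule.zero_mem _
      · exact Submodule.smul_mem _ _ (hU b hb)
    exact hmem
  -- every element of H' is zero
  have key : ∀ Y ∈ H', Y = 0 := by
    intro Y hY
    have hYsl : Matrix.trace Y = 0 := by
      exact LinearMap.mem_ker.mp (hH'sl hY)
    -- Step A : column e0 of Y vanishes off the diagonal
    have colzero : ∀ j, j ≠ e0 → Y j e0 = 0 := by
      intro j hj
      have hZ : ⁅E j, Y⁆ ∈ H' := hinv _ (hU j hj) Y hY
      have hW : ⁅E j, ⁅E j, Y⁆⁆ ∈ H' := hinv _ (hU j hj) _ hZ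
      have hWeq : ⁅E j, ⁅E j, Y⁆⁆ = (-(2 * Y j e0)) • E j := by
        ext a b
        rw [hbr j _ a b, hbr j Y j b, hbr j Y a e0, hterm]
        rw [if_neg hj, if_neg (fun h : (e0 : Fin n) = j => hj h.symm)]
        by_cases ha : a = e0 <;> by_cases hb2 : b = j
        · subst ha; subst hb2
          simp only [if_pos rfl, if_true, and_self, zero_sub, sub_zero]
          ring
        · have hb2' : ¬ (j = b) := fun h => hb2 h.symm
          simp only [if_pos ha, if_neg hb2, hb2', if_true, if_false, and_false]
          ring
        · have ha' : ¬ (e0 = a) := fun h => ha h.symm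
          simp only [if_neg ha, if_pos hb2, ha', if_true, if_false, false_and, zero_sub, sub_zero]
        · have ha' : ¬ (e0 = a) := fun h => ha h.symm
          simp only [if_neg ha, if_neg hb2, ha', if_true, if_false, false_and]
          ring
      have hW0 : (-(2 * Y j e0)) • E j = 0 := by
        rw [← hWeq]
        have hm : ⁅E j, ⁅E j, Y⁆⁆ ∈ H.toSubmodule ⊓ H' := by
          refine ⟨?_, hW⟩
          rw [hWeq]
          exact Submodule.smul_mem _ _ (hU j hj)
        rw [hdisj] at hm
        exact hm
      have h2 := congrFun (congrFun hW0 e0) j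
      rw [hterm] at h2
      simp only [Matrix.zero_apply, and_self, if_pos rfl] at h2
      have h3 := neg_eq_zero.mp h2
      rcases mul_eq_zero.mp h3 with h | h
      · norm_num at h
      · exact h
    -- Step B : rows off e0 are diagonal with common entry Y e0 e0
    have rowdiag : ∀ j, j ≠ e0 → ∀ b, Y j b = if b = j then Y e0 e0 else 0 := by
      intro j hj b
      have hZ' : ⁅E j, Y⁆ ∈ H' := hinv _ (hU j hj) Y hY
      have hZH : ⁅E j, Y⁆ ∈ H := by
        apply hrow
        · intro a c ha
          rw [hbr, if_neg ha, colzero a ha, zero_sub]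
          simp
        · rw [hbr, if_pos rfl, if_neg (fun h : (e0 : Fin n) = j => hj h.symm),
            colzero j hj, sub_zero]
      have hZ0 : ⁅E j, Y⁆ = 0 := by
        have hm : ⁅E j, Y⁆ ∈ H.toSubmodule ⊓ H' := ⟨hZH, hZ'⟩
        rw [hdisj] at hm
        exact hm
      have h := congrFun (congrFun hZ0 e0) b
      rw [hbr, if_pos rfl] at h
      simp only [Matrix.zero_apply] at h
      rw [sub_eq_zero] at h
      exact h
    -- trace gives Y e0 e0 = 0
    have hdiag : ∀ i, Y i i = Y e0 e0 := by
      intro i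
      by_cases hi : i = e0
      · rw [hi]
      · rw [rowdiag i hi i, if_pos rfl]
    have hYee : Y e0 e0 = 0 := by
      have htr : (n : ℂ) * Y e0 e0 = 0 := by
        have htreq : Matrix.trace Y = ∑ i : Fin n, Y i i := rfl
        rw [htreq] at hYsl
        calc (n : ℂ) * Y e0 e0 = ∑ _i : Fin n, Y e0 e0 := by
              rw [Finset.sum_const, Finset.card_univ, Fintype.card_fin, nsmul_eq_mul]
          _ = ∑ i : Fin n, Y i i := Finset.sum_congr rfl fun i _ => (hdiag i).symm
          _ = 0 := hYsl
      have hn0 : (n : ℂ) ≠ 0 := by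
        simp only [ne_eq, Nat.cast_eq_zero]
        omega
      exact (mul_eq_zero.mp htr).resolve_left hn0
    -- Y lies in H, hence in H ⊓ H' = ⊥
    have hYH : Y ∈ H := by
      apply hrow
      · intro a b ha
        rw [rowdiag a ha b]
        by_cases hb : b = a <;> simp [hb, hYee]
      · exact hYee
    have hm : Y ∈ H.toSubmodule ⊓ H' := ⟨hYH, hY⟩
    rw [hdisj] at hm
    exact hm
  -- hence H' = ⊥ and H = sl
  have hH'bot : H' = ⊥ := by
    rw [Submodule.eq_bot_iff]
    exact key
  rw [hH'bot, sup_bot_eq] at hsup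
  apply le_antisymm hHsl
  intro x hx
  have hxH : x ∈ H.toSubmodule := by
    rw [hsup]
    exact hx
  exact hxH
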